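/- Let G be an ordinary oriented graph and A a finite abelian group such that G has a nowhere-zero A-flow. If v is a vertex of degree at most 3 and γ: δ(v) → A \ {0} satisfies ∂γ(v) = 0, then there exists a nowhere-zero A-flow φ of G with φ(e) = γ(e) for every edge e incident with v. -/

import Mathlib

open scoped Classical

noncomputable section

/-- A finite directed multigraph. -/
structure Digraph' where
  V : Type
  E : Type
  [fV : Fintype V]
  [fE : Fintype E]
  src : E → V
  tgt : E → V

attribute [instance] Digraph'.fV Digraph'.fE

namespace Digraph'

variable (G : Digraph')

/-- The net flow (boundary) of an edge labelling at a vertex: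
outgoing minus incoming. -/
def netFlow {A : Type} [AddCommGroup A] (φ : G.E → A) (v : G.V) : A :=
  (∑ e : G.E, if G.src e = v then φ e else 0) -
    ∑ e : G.E, if G.tgt e = v then φ e else 0

def IsFlow {A : Type} [AddCommGroup A] (φ : G.E → A) : Prop :=
  ∀ v, G.netFlow φ v = 0

def IsNZFlow {A : Type} [AddCommGroup A] (φ : G.E → A) : Prop :=
  G.IsFlow φ ∧ ∀ e, φ e ≠ 0

end Digraph'

namespace Digraph'

def degree (G : Digraph') (v : G.V) : ℕ :=
  Set.ncard {e | G.src e = v} + Set.ncard {e | G.tgt e = v}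

end Digraph'

namespace FlowAux
set_option linter.unusedSectionVars false
open Finset
variable (G : Digraph') {A : Type} [AddCommGroup A] [Fintype A]

def pnet (π : G.V → G.V) (φ : G.E → A) (w : G.V) : A :=
  ∑ e : G.E, ((if π (G.src e) = w then φ e else 0) - (if π (G.tgt e) = w then φ e else 0))

lemma pnet_id (φ : G.E → A) (w : G.V) : pnet G id φ w = G.netFlow φ w := by
  unfold pnet Digraph'.netFlow
  rw [Finset.sum_sub_distrib]
  rfl

section merge
variable (π : G.V → G.V) (s t : G.V)

/-- the merged projection -/
def mrg (x : G.V) : G.V := if π x = s then t else π x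

lemma pnet_mrg_ne (φ : G.E → A) (w : G.V) (hw1 : w ≠ s) (hw2 : w ≠ t) :
    pnet G (mrg G π s t) φ w = pnet G π φ w := by
  unfold pnet mrg
  refine Finset.sum_congr rfl fun e _ => ?_
  have key : ∀ x : G.V, ((if π x = s then t else π x) = w) ↔ (π x = w) := by
    intro x
    by_cases h : π x = s
    · simp only [h, if_pos rfl]
      constructor
      · intro ht; exact absurd ht.symm hw2
      · intro hs; exact absurd hs.symm hw1
    · simp [h]
  rw [if_congr (key (G.src e)) rfl rfl, if_congr (key (G.tgt e)) rfl rfl]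

lemma pnet_mrg_s (hst : s ≠ t) (φ : G.E → A) :
    pnet G (mrg G π s t) φ s = 0 := by
  unfold pnet mrg
  have key : ∀ x : G.V, ¬ ((if π x = s then t else π x) = s) := by
    intro x
    by_cases h : π x = s <;> simp [h, hst.symm]
  refine Finset.sum_eq_zero fun e _ => ?_
  rw [if_neg (key (G.src e)), if_neg (key (G.tgt e)), sub_zero]

lemma pnet_mrg_t (hst : s ≠ t) (φ : G.E → A) :
    pnet G (mrg G π s t) φ t = pnet G π φ s + pnet G π φ t := by
  unfold pnet mrg
  have key : ∀ (x : G.V) (c : A),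
      (if (if π x = s then t else π x) = t then c else 0)
        = (if π x = s then c else 0) + (if π x = t then c else 0) := by
    intro x c
    by_cases h : π x = s
    · simp [h, hst]
    · simp [h]
  rw [← Finset.sum_add_distrib]
  refine Finset.sum_congr rfl fun e _ => ?_
  rw [key (G.src e), key (G.tgt e)]
  abel

lemma flow_mrg (hst : s ≠ t) (φ : G.E → A) (h : ∀ w, pnet G π φ w = 0) :
    ∀ w, pnet G (mrg G π s t) φ w = 0 := by
  intro w
  by_cases h1 : w = s
  · rw [h1, pnet_mrg_s G π s t hst]
  · by_cases h2 : w = t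
    · rw [h2, pnet_mrg_t G π s t hst, h, h, add_zero]
    · rw [pnet_mrg_ne G π s t φ w h1 h2, h]


end merge

lemma pnet_update (π : G.V → G.V) (φ : G.E → A) (e' : G.E) (b : A) (w : G.V) :
    pnet G π (Function.update φ e' b) w
      = pnet G π φ w
        + (((if π (G.src e') = w then b else 0) - (if π (G.tgt e') = w then b else 0))
          - ((if π (G.src e') = w then φ e' else 0) - (if π (G.tgt e') = w then φ e' else 0))) := by
  unfold pnet
  rw [← Finset.sum_erase_add _ _ (Finset.mem_univ e'),
      ← Finset.sum_erase_add (s := Finset.univ)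
        (f := fun e => ((if π (G.src e) = w then φ e else 0) - (if π (G.tgt e) = w then φ e else 0)))
        (Finset.mem_univ e')]
  have h : ∀ e ∈ Finset.univ.erase e',
      ((if π (G.src e) = w then Function.update φ e' b e else 0)
        - (if π (G.tgt e) = w then Function.update φ e' b e else 0))
      = ((if π (G.src e) = w then φ e else 0) - (if π (G.tgt e) = w then φ e else 0)) := by
    intro e he
    rw [Function.update_of_ne (Finset.mem_erase.1 he).1]
  rw [Finset.sum_congr rfl h, Function.update_self]
  abel

def inc (G : Digraph') (v : G.V) (e : G.E) : Prop := G.src e = v ∨ G.tgt e = v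

variable (v : G.V)

def Good (π : G.V → G.V) (D : Finset G.E) (γ : G.E → A) (φ : G.E → A) : Prop :=
  (∀ w, pnet G π φ w = 0) ∧ (∀ e ∈ D, φ e = 0) ∧
    (∀ e, e ∉ D → ¬ inc G v e → φ e ≠ 0) ∧ (∀ e, inc G v e → φ e = γ e)

def NS (π : G.V → G.V) (D : Finset G.E) (γ : G.E → A) : Finset (G.E → A) :=
  Finset.univ.filter (Good G v π D γ)

lemma mem_NS {π : G.V → G.V} {D : Finset G.E} {γ : G.E → A} {φ : G.E → A} :
    φ ∈ NS G v π D γ ↔ Good G v π D γ φ := by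
  unfold NS; simp

/-- loop case: contracting an edge whose endpoints are already identified. -/
lemma step_a (π : G.V → G.V) (D : Finset G.E) (γ : G.E → A) (e' : G.E)
    (he'D : e' ∉ D) (he'i : ¬ inc G v e') (hst : π (G.src e') = π (G.tgt e')) :
    (NS G v π D γ).card
      = ((Finset.univ.erase (0 : A)) ×ˢ NS G v π (insert e' D) γ).card := by
  have hupd : ∀ (φ : G.E → A) (b : A) (w : G.V),
      pnet G π (Function.update φ e' b) w = pnet G π φ w := by
    intro φ b w
    rw [pnet_update G π φ e' b w, hst]
    abel
  have hi : ∀ φ ∈ NS G v π D γ,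
      (φ e', Function.update φ e' 0) ∈ (Finset.univ.erase (0 : A)) ×ˢ NS G v π (insert e' D) γ := by
    intro φ hφ
    obtain ⟨hflow, hD, hnz, hinc⟩ := (mem_NS G v).1 hφ
    rw [Finset.mem_product]
    refine ⟨Finset.mem_erase.2 ⟨hnz e' he'D he'i, Finset.mem_univ _⟩, ?_⟩
    refine (mem_NS G v).2 ⟨fun w => by rw [hupd]; exact hflow w, ?_, ?_, ?_⟩
    · intro e he
      show Function.update φ e' 0 e = 0
      rcases Finset.mem_insert.1 he with h | h
      · rw [h, Function.update_self]
      · have he' : e ≠ e' := fun hh => he'D (by rw [← hh]; exact h)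
        rw [Function.update_of_ne he']
        exact hD e h
    · intro e heD hei
      show Function.update φ e' 0 e ≠ 0
      have he' : e ≠ e' := fun hh => heD (by rw [hh]; exact Finset.mem_insert_self e' D)
      rw [Function.update_of_ne he']
      exact hnz e (fun hh => heD (Finset.mem_insert_of_mem hh)) hei
    · intro e hei
      show Function.update φ e' 0 e = γ e
      have he' : e ≠ e' := fun hh => he'i (by rw [← hh]; exact hei)
      rw [Function.update_of_ne he']
      exact hinc e hei
  have hj : ∀ p ∈ (Finset.univ.erase (0 : A)) ×ˢ NS G v π (insert e' D) γ,
      Function.update p.2 e' p.1 ∈ NS G v π D γ := by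
    rintro ⟨b, ψ⟩ hb
    rw [Finset.mem_product] at hb
    have hb0 : b ≠ 0 := (Finset.mem_erase.1 hb.1).1
    obtain ⟨hflow, hD, hnz, hinc⟩ := (mem_NS G v).1 hb.2
    refine (mem_NS G v).2 ⟨fun w => by rw [hupd]; exact hflow w, ?_, ?_, ?_⟩
    · intro e he
      have he' : e ≠ e' := fun hh => he'D (by rw [← hh]; exact he)
      rw [Function.update_of_ne he']
      exact hD e (Finset.mem_insert_of_mem he)
    · intro e heD hei
      by_cases he' : e = e'
      · rw [he', Function.update_self]; exact hb0
      · rw [Function.update_of_ne he']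
        refine hnz e ?_ hei
        intro hh
        rcases Finset.mem_insert.1 hh with h | h
        · exact he' h
        · exact heD h
    · intro e hei
      have he' : e ≠ e' := fun hh => he'i (by rw [← hh]; exact hei)
      rw [Function.update_of_ne he']
      exact hinc e hei
  refine Finset.card_bij' (fun φ _ => (φ e', Function.update φ e' 0))
    (fun p _ => Function.update p.2 e' p.1) hi hj ?_ ?_
  · intro φ hφ
    simp only [Function.update_idem, Function.update_eq_self]
  · rintro ⟨b, ψ⟩ hb
    rw [Finset.mem_product] at hb
    have hψ0 : ψ e' = 0 := ((mem_NS G v).1 hb.2).2.1 e' (Finset.mem_insert_self e' D)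
    simp only [Function.update_self, Function.update_idem]
    rw [Prod.mk.injEq]
    exact ⟨rfl, by rw [← hψ0]; exact Function.update_eq_self e' ψ⟩


lemma step_b (π : G.V → G.V) (D : Finset G.E) (γ : G.E → A) (e' : G.E)
    (he'D : e' ∉ D) (he'i : ¬ inc G v e') (hst : π (G.src e') ≠ π (G.tgt e')) :
    (NS G v (mrg G π (π (G.src e')) (π (G.tgt e'))) (insert e' D) γ).card
      = (NS G v π D γ).card + (NS G v π (insert e' D) γ).card := by
  have hts : ¬ (π (G.tgt e') = π (G.src e')) := fun hh => hst hh.symm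
  have h1 : mrg G π (π (G.src e')) (π (G.tgt e')) (G.src e') = π (G.tgt e') := by
    unfold mrg; rw [if_pos rfl]
  have h2 : mrg G π (π (G.src e')) (π (G.tgt e')) (G.tgt e') = π (G.tgt e') := by
    unfold mrg; rw [if_neg hts]
  -- recovery of the deleted value from the flow condition at π (src e')
  have hrec : ∀ φ : G.E → A, pnet G π (Function.update φ e' 0) (π (G.src e')) =
      pnet G π φ (π (G.src e')) - φ e' := by
    intro φ
    rw [pnet_update G π φ e' 0 (π (G.src e'))]
    simp only [if_pos rfl, if_neg hts, sub_zero, sub_self, add_zero, zero_sub]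
    abel_nf
    simp
  -- updating e' does not change pnet of the merged projection
  have hupd' : ∀ (φ : G.E → A) (b : A) (w : G.V),
      pnet G (mrg G π (π (G.src e')) (π (G.tgt e'))) (Function.update φ e' b) w
        = pnet G (mrg G π (π (G.src e')) (π (G.tgt e'))) φ w := by
    intro φ b w
    rw [pnet_update, h1, h2]
    abel
  -- extension: from a merged flow vanishing at e', recover a π-flow
  have hext : ∀ ψ : G.E → A, ψ e' = 0 →
      (∀ w, pnet G (mrg G π (π (G.src e')) (π (G.tgt e'))) ψ w = 0) →
      ∀ w, pnet G π (Function.update ψ e' (- pnet G π ψ (π (G.src e')))) w = 0 := by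
    intro ψ hψ0 hflow' w
    rw [pnet_update G π ψ e' _ w, hψ0]
    by_cases hw1 : w = π (G.src e')
    · subst hw1
      simp only [ite_self, sub_zero, sub_self, if_true]
      rw [if_neg hts]
      abel
    · by_cases hw2 : w = π (G.tgt e')
      · subst hw2
        have h3 : pnet G π ψ (π (G.src e')) + pnet G π ψ (π (G.tgt e')) = 0 := by
          rw [← pnet_mrg_t G π (π (G.src e')) (π (G.tgt e')) hst ψ]
          exact hflow' (π (G.tgt e'))
        simp only [ite_self, sub_zero, sub_self, if_true]
        rw [if_neg hst, zero_sub, neg_neg, add_comm]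
        exact h3
      · have h4 := pnet_mrg_ne G π (π (G.src e')) (π (G.tgt e')) ψ w hw1 hw2
        simp only [ite_self, sub_zero, sub_self]
        rw [← h4, hflow' w,
          if_neg (show ¬π (G.src e') = w from fun hh => hw1 hh.symm),
          if_neg (show ¬π (G.tgt e') = w from fun hh => hw2 hh.symm)]
        simp
  -- forward image membership
  have himg : ∀ φ ∈ NS G v π D γ,
      Function.update φ e' 0 ∈ NS G v (mrg G π (π (G.src e')) (π (G.tgt e'))) (insert e' D) γ := by
    intro φ hφ
    obtain ⟨hflow, hD, hnz, hinc⟩ := (mem_NS G v).1 hφ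
    refine (mem_NS G v).2 ⟨?_, ?_, ?_, ?_⟩
    · intro w
      rw [hupd']
      exact flow_mrg G π (π (G.src e')) (π (G.tgt e')) hst φ hflow w
    · intro e he
      rcases Finset.mem_insert.1 he with h | h
      · rw [h, Function.update_self]
      · have he' : e ≠ e' := fun hh => he'D (by rw [← hh]; exact h)
        rw [Function.update_of_ne he']
        exact hD e h
    · intro e heD hei
      have he' : e ≠ e' := fun hh => heD (by rw [hh]; exact Finset.mem_insert_self e' D)
      rw [Function.update_of_ne he']
      exact hnz e (fun hh => heD (Finset.mem_insert_of_mem hh)) hei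
    · intro e hei
      have he' : e ≠ e' := fun hh => he'i (by rw [← hh]; exact hei)
      rw [Function.update_of_ne he']
      exact hinc e hei
  -- the subset inclusion
  have hsub : ∀ ψ ∈ NS G v π (insert e' D) γ,
      ψ ∈ NS G v (mrg G π (π (G.src e')) (π (G.tgt e'))) (insert e' D) γ := by
    intro ψ hψ
    obtain ⟨hflow, hD, hnz, hinc⟩ := (mem_NS G v).1 hψ
    exact (mem_NS G v).2
      ⟨flow_mrg G π (π (G.src e')) (π (G.tgt e')) hst ψ hflow, hD, hnz, hinc⟩
  -- the set identity
  have hsetequ : NS G v (mrg G π (π (G.src e'))  (π (G.tgt e'))) (insert e' D) γ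
      = ((NS G v π D γ).image (fun φ => Function.update φ e' 0))
          ∪ NS G v π (insert e' D) γ := by
    ext ψ
    simp only [Finset.mem_union, Finset.mem_image]
    constructor
    · intro hψ
      obtain ⟨hflow', hD, hnz, hinc⟩ := (mem_NS G v).1 hψ
      have hψ0 : ψ e' = 0 := hD e' (Finset.mem_insert_self e' D)
      by_cases hb : pnet G π ψ (π (G.src e')) = 0
      · -- ψ itself is a π-flow
        right
        have hflow : ∀ w, pnet G π ψ w = 0 := by
          have h5 := hext ψ hψ0 hflow'
          intro w
          have h6 := h5 w
          have h7 : Function.update ψ e' (- pnet G π ψ (π (G.src e'))) = ψ := by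
            rw [hb, neg_zero, ← hψ0]
            exact Function.update_eq_self e' ψ
          rw [h7] at h6
          exact h6
        exact (mem_NS G v).2 ⟨hflow, hD, hnz, hinc⟩
      · left
        refine ⟨Function.update ψ e' (- pnet G π ψ (π (G.src e'))), ?_, ?_⟩
        · refine (mem_NS G v).2 ⟨hext ψ hψ0 hflow', ?_, ?_, ?_⟩
          · intro e he
            have he' : e ≠ e' := fun hh => he'D (by rw [← hh]; exact he)
            rw [Function.update_of_ne he']
            exact hD e (Finset.mem_insert_of_mem he)
          · intro e heD hei
            by_cases he' : e = e'
            · rw [he', Function.update_self]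
              exact fun hh => hb (by rwa [neg_eq_zero] at hh)
            · rw [Function.update_of_ne he']
              refine hnz e ?_ hei
              intro hh
              rcases Finset.mem_insert.1 hh with h | h
              · exact he' h
              · exact heD h
          · intro e hei
            have he' : e ≠ e' := fun hh => he'i (by rw [← hh]; exact hei)
            rw [Function.update_of_ne he']
            exact hinc e hei
        · rw [Function.update_idem, ← hψ0]
          exact Function.update_eq_self e' ψ
    · rintro (⟨φ, hφ, rfl⟩ | hψ)
      · exact himg φ hφ
      · exact hsub ψ hψ
  have hinj : Set.InjOn (fun φ => Function.update φ e' 0)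
      (↑(NS G v π D γ) : Set (G.E → A)) := by
    intro φ1 h1m' φ2 h2m' heq
    have h1m := Finset.mem_coe.1 h1m'
    have h2m := Finset.mem_coe.1 h2m'
    obtain ⟨hflow1, _, _, _⟩ := (mem_NS G v).1 h1m
    obtain ⟨hflow2, _, _, _⟩ := (mem_NS G v).1 h2m
    simp only at heq
    have hv1 : φ1 e' = φ2 e' := by
      have e1 := hrec φ1
      have e2 := hrec φ2
      rw [heq] at e1
      rw [e2, hflow2 (π (G.src e'))] at e1
      rw [hflow1 (π (G.src e'))] at e1
      have := e1.symm
      simpa using this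
    funext e
    by_cases he' : e = e'
    · rw [he', hv1]
    · have := congrFun heq e
      rwa [Function.update_of_ne he', Function.update_of_ne he'] at this
  have hdisj : Disjoint ((NS G v π D γ).image (fun φ => Function.update φ e' 0))
      (NS G v π (insert e' D) γ) := by
    rw [Finset.disjoint_left]
    rintro ψ hψ1 hψ2
    obtain ⟨φ, hφ, hφψ⟩ := Finset.mem_image.1 hψ1
    obtain ⟨hflow1, hD1, hnz1, _⟩ := (mem_NS G v).1 hφ
    obtain ⟨hflow2, _, _, _⟩ := (mem_NS G v).1 hψ2
    have h6 := hrec φ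
    rw [hφψ, hflow2 (π (G.src e')), hflow1 (π (G.src e')), zero_sub] at h6
    exact hnz1 e' he'D he'i (neg_eq_zero.1 h6.symm)
  rw [hsetequ, Finset.card_union_of_disjoint hdisj, Finset.card_image_of_injOn hinj]


section base

lemma not_inc_of (v : G.V) {e : G.E} (h1 : ¬ G.src e = v) (h2 : ¬ G.tgt e = v) :
    ¬ inc G v e := fun hinc => Or.elim hinc h1 h2

/-- non-loop edges at `v` -/
def Fv (v : G.V) : Finset G.E := Finset.univ.filter (fun e => inc G v e ∧ G.src e ≠ G.tgt e)

/-- outward value at `v` -/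
def aval (v : G.V) (γ : G.E → A) (e : G.E) : A := if G.src e = v then γ e else - γ e

/-- the far endpoint -/
def oth (v : G.V) (e : G.E) : G.V := if G.src e = v then G.tgt e else G.src e

variable (v : G.V)

lemma mem_Fv_src {e : G.E} (h1 : G.src e = v) (h2 : ¬ G.tgt e = v) : e ∈ Fv G v := by
  unfold Fv; rw [Finset.mem_filter]
  exact ⟨Finset.mem_univ e, Or.inl h1, fun hh => h2 (by rw [← hh]; exact h1)⟩

lemma mem_Fv_tgt {e : G.E} (h1 : ¬ G.src e = v) (h2 : G.tgt e = v) : e ∈ Fv G v := by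
  unfold Fv; rw [Finset.mem_filter]
  exact ⟨Finset.mem_univ e, Or.inr h2, fun hh => h1 (by rw [hh]; exact h2)⟩

lemma not_mem_Fv_loop {e : G.E} (h1 : G.src e = v) (h2 : G.tgt e = v) : e ∉ Fv G v := by
  unfold Fv; rw [Finset.mem_filter]
  rintro ⟨-, -, hne⟩
  exact hne (by rw [h1, h2])

lemma not_mem_Fv_far {e : G.E} (h1 : ¬ G.src e = v) (h2 : ¬ G.tgt e = v) : e ∉ Fv G v := by
  unfold Fv; rw [Finset.mem_filter]
  rintro ⟨-, hinc, -⟩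
  exact not_inc_of G v h1 h2 hinc

lemma netFlow_eq_sum_aval (γ : G.E → A) :
    G.netFlow γ v = ∑ e ∈ Fv G v, aval G v γ e := by
  unfold Digraph'.netFlow
  rw [← Finset.sum_sub_distrib]
  have h : ∀ e : G.E, ((if G.src e = v then γ e else 0) - (if G.tgt e = v then γ e else 0))
      = (if e ∈ Fv G v then aval G v γ e else 0) := by
    intro e
    by_cases h1 : G.src e = v <;> by_cases h2 : G.tgt e = v
    · rw [if_pos h1, if_pos h2, if_neg (not_mem_Fv_loop G v h1 h2), sub_self]
    · rw [if_pos h1, if_neg h2, if_pos (mem_Fv_src G v h1 h2), sub_zero]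
      unfold aval; rw [if_pos h1]
    · rw [if_neg h1, if_pos h2, if_pos (mem_Fv_tgt G v h1 h2), zero_sub]
      unfold aval; rw [if_neg h1]
    · rw [if_neg h1, if_neg h2, if_neg (not_mem_Fv_far G v h1 h2), sub_self]
  rw [Finset.sum_congr rfl (fun e _ => h e), Finset.sum_ite_mem, Finset.univ_inter]

lemma pnet_phiof (π : G.V → G.V) (γ : G.E → A) (w : G.V) :
    pnet G π (fun e => if inc G v e then γ e else 0) w
      = (if π v = w then ∑ e ∈ Fv G v, aval G v γ e else 0)
        - ∑ e ∈ (Fv G v).filter (fun e => π (oth G v e) = w), aval G v γ e := by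
  have hneg : ∀ (c : Prop) (inst : Decidable c) (x : A),
      (if c then -x else 0) = -(if c then x else 0) := by
    intro c inst x
    by_cases h : c <;> simp [h]
  have h : ∀ e : G.E,
      ((if π (G.src e) = w then (if inc G v e then γ e else 0) else 0)
        - (if π (G.tgt e) = w then (if inc G v e then γ e else 0) else 0))
      = (if e ∈ Fv G v then
          ((if π v = w then aval G v γ e else 0)
            - (if π (oth G v e) = w then aval G v γ e else 0)) else 0) := by
    intro e
    by_cases h1 : G.src e = v <;> by_cases h2 : G.tgt e = v
    · have hinc : inc G v e := Or.inl h1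
      rw [if_neg (not_mem_Fv_loop G v h1 h2), if_pos hinc, h1, h2, sub_self]
    · have hinc : inc G v e := Or.inl h1
      rw [if_pos (mem_Fv_src G v h1 h2), if_pos hinc, h1]
      unfold aval oth
      rw [if_pos h1, if_pos h1]
    · have hinc : inc G v e := Or.inr h2
      rw [if_pos (mem_Fv_tgt G v h1 h2), if_pos hinc, h2]
      unfold aval oth
      rw [if_neg h1, if_neg h1, hneg, hneg]
      abel
    · rw [if_neg (not_mem_Fv_far G v h1 h2), if_neg (not_inc_of G v h1 h2)]
      simp
  unfold pnet
  rw [Finset.sum_congr rfl (fun e _ => h e), Finset.sum_ite_mem, Finset.univ_inter,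
    Finset.sum_sub_distrib]
  congr 1
  · by_cases hw : π v = w
    · rw [if_pos hw]
      exact Finset.sum_congr rfl (fun e _ => if_pos hw)
    · rw [if_neg hw]
      exact Finset.sum_eq_zero (fun e _ => if_neg hw)
  · rw [Finset.sum_filter]

lemma Fv_card_le : (Fv G v).card ≤ G.degree v := by
  have h1 : {e : G.E | G.src e = v}.ncard = (Finset.univ.filter (fun e => G.src e = v)).card := by
    rw [Set.ncard_eq_toFinset_card', Set.toFinset_setOf]
  have h2 : {e : G.E | G.tgt e = v}.ncard = (Finset.univ.filter (fun e => G.tgt e = v)).card := by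
    rw [Set.ncard_eq_toFinset_card', Set.toFinset_setOf]
  have hsub : Fv G v ⊆ (Finset.univ.filter (fun e => G.src e = v))
      ∪ (Finset.univ.filter (fun e => G.tgt e = v)) := by
    intro e he
    unfold Fv at he
    rw [Finset.mem_filter] at he
    rw [Finset.mem_union, Finset.mem_filter, Finset.mem_filter]
    rcases he.2.1 with h | h
    · exact Or.inl ⟨Finset.mem_univ e, h⟩
    · exact Or.inr ⟨Finset.mem_univ e, h⟩
  unfold Digraph'.degree
  rw [h1, h2]
  exact le_trans (Finset.card_le_card hsub) (Finset.card_union_le _ _)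

lemma zz (F S : Finset G.E) (hS : S ⊆ F) (hF : F.card ≤ 3) (a : G.E → A)
    (ha : ∀ e ∈ F, a e ≠ 0) (hFa : ∑ e ∈ F, a e = 0) (hSa : ∑ e ∈ S, a e = 0) :
    S = ∅ ∨ S = F := by
  by_cases hS0 : S = ∅
  · exact Or.inl hS0
  by_cases hSF : S = F
  · exact Or.inr hSF
  exfalso
  have hlt : S.card < F.card := Finset.card_lt_card (Finset.ssubset_iff_subset_ne.2 ⟨hS, hSF⟩)
  have h1 : 1 ≤ S.card := Finset.card_pos.2 (Finset.nonempty_of_ne_empty hS0)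
  rcases (by omega : S.card = 1 ∨ (S.card = 2 ∧ F.card = 3)) with h | ⟨h, hF3⟩
  · obtain ⟨x, hx⟩ := Finset.card_eq_one.1 h
    rw [hx, Finset.sum_singleton] at hSa
    exact ha x (hS (by rw [hx]; exact Finset.mem_singleton_self x)) hSa
  · have hcd : (F \ S).card = 1 := by
      rw [Finset.card_sdiff_of_subset hS]; omega
    obtain ⟨y, hy⟩ := Finset.card_eq_one.1 hcd
    have hsum := Finset.sum_sdiff (f := a) hS
    rw [hSa, add_zero, hFa, hy, Finset.sum_singleton] at hsum
    have hyF : y ∈ F := (Finset.mem_sdiff.1 (hy ▸ Finset.mem_singleton_self y)).1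
    exact ha y hyF hsum
end base

lemma base (v : G.V) (π : G.V → G.V) (D : Finset G.E) (γ γ' : G.E → A)
    (hbase : ∀ e, ¬ inc G v e → e ∈ D) (hD : ∀ e ∈ D, ¬ inc G v e)
    (hv : G.degree v ≤ 3)
    (h0 : ∀ e, inc G v e → γ e ≠ 0) (h0' : ∀ e, inc G v e → γ' e ≠ 0)
    (hb : G.netFlow γ v = 0) (hb' : G.netFlow γ' v = 0) :
    (NS G v π D γ).card = (NS G v π D γ').card := by
  have main : ∀ (δ δ' : G.E → A), (∀ e, inc G v e → δ e ≠ 0) →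
      G.netFlow δ v = 0 → G.netFlow δ' v = 0 →
      (∀ w, pnet G π (fun e => if inc G v e then δ e else 0) w = 0) →
      (∀ w, pnet G π (fun e => if inc G v e then δ' e else 0) w = 0) := by
    intro δ δ' hδ0 hδb hδb' hcond w
    have hsumF : ∑ e ∈ Fv G v, aval G v δ e = 0 := by
      rw [← netFlow_eq_sum_aval]; exact hδb
    have hsumF' : ∑ e ∈ Fv G v, aval G v δ' e = 0 := by
      rw [← netFlow_eq_sum_aval]; exact hδb'
    have hSw : ∑ e ∈ (Fv G v).filter (fun e => π (oth G v e) = w), aval G v δ e = 0 := by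
      have hc := hcond w
      rw [pnet_phiof, hsumF, ite_self, zero_sub, neg_eq_zero] at hc
      exact hc
    have ha : ∀ e ∈ Fv G v, aval G v δ e ≠ 0 := by
      intro e he
      have hinc : inc G v e := by
        unfold Fv at he; rw [Finset.mem_filter] at he; exact he.2.1
      unfold aval
      by_cases h1 : G.src e = v
      · rw [if_pos h1]; exact hδ0 e hinc
      · rw [if_neg h1]; exact neg_ne_zero.2 (hδ0 e hinc)
    have hZ := zz G (Fv G v) ((Fv G v).filter (fun e => π (oth G v e) = w))
      (Finset.filter_subset _ _) (le_trans (Fv_card_le G v) hv) (aval G v δ) ha hsumF hSw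
    rw [pnet_phiof, hsumF', ite_self, zero_sub, neg_eq_zero]
    rcases hZ with h | h
    · rw [h, Finset.sum_empty]
    · rw [h]; exact hsumF'
  have hsub : ∀ (δ : G.E → A),
      NS G v π D δ ⊆ {fun e => if inc G v e then δ e else 0} := by
    intro δ φ hφ
    obtain ⟨hflow, hDz, hnz, hincp⟩ := (mem_NS G v).1 hφ
    rw [Finset.mem_singleton]
    funext e
    by_cases he : inc G v e
    · rw [if_pos he]; exact hincp e he
    · rw [if_neg he]; exact hDz e (hbase e he)
  have hmem : ∀ (δ : G.E → A),
      ((fun e => if inc G v e then δ e else 0) ∈ NS G v π D δ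
        ↔ ∀ w, pnet G π (fun e => if inc G v e then δ e else 0) w = 0) := by
    intro δ
    constructor
    · intro h; exact ((mem_NS G v).1 h).1
    · intro h
      refine (mem_NS G v).2 ⟨h, ?_, ?_, ?_⟩
      · intro e he
        show (if inc G v e then δ e else 0) = 0
        rw [if_neg (hD e he)]
      · intro e heD hei
        exact absurd (hbase e hei) heD
      · intro e hei
        show (if inc G v e then δ e else 0) = δ e
        rw [if_pos hei]
  rcases Finset.subset_singleton_iff.1 (hsub γ) with h | h <;>
    rcases Finset.subset_singleton_iff.1 (hsub γ') with h' | h'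
  · rw [h, h']
  · exfalso
    have hc' : ∀ w, pnet G π (fun e => if inc G v e then γ' e else 0) w = 0 :=
      ((mem_NS G v).1 (by rw [h']; exact Finset.mem_singleton_self _)).1
    have hc := main γ' γ h0' hb' hb hc'
    have hm : (fun e => if inc G v e then γ e else 0) ∈ NS G v π D γ := (hmem γ).2 hc
    rw [h] at hm
    exact Finset.notMem_empty _ hm
  · exfalso
    have hc : ∀ w, pnet G π (fun e => if inc G v e then γ e else 0) w = 0 :=
      ((mem_NS G v).1 (by rw [h]; exact Finset.mem_singleton_self _)).1
    have hc' := main γ γ' h0 hb hb' hc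
    have hm : (fun e => if inc G v e then γ' e else 0) ∈ NS G v π D γ' := (hmem γ').2 hc'
    rw [h'] at hm
    exact Finset.notMem_empty _ hm
  · rw [h, h', Finset.card_singleton, Finset.card_singleton]

lemma key (v : G.V) (hv : G.degree v ≤ 3) (γ γ' : G.E → A)
    (h0 : ∀ e, inc G v e → γ e ≠ 0) (h0' : ∀ e, inc G v e → γ' e ≠ 0)
    (hb : G.netFlow γ v = 0) (hb' : G.netFlow γ' v = 0) :
    ∀ (n : ℕ) (π : G.V → G.V) (D : Finset G.E), (∀ e ∈ D, ¬ inc G v e) →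
      (Finset.univ.filter (fun e => e ∉ D ∧ ¬ inc G v e)).card ≤ n →
      (NS G v π D γ).card = (NS G v π D γ').card := by
  intro n
  induction n with
  | zero =>
    intro π D hD hn
    have hbase : ∀ e, ¬ inc G v e → e ∈ D := by
      intro e hni
      by_contra heD
      have hm : e ∈ Finset.univ.filter (fun e => e ∉ D ∧ ¬ inc G v e) := by
        rw [Finset.mem_filter]; exact ⟨Finset.mem_univ e, heD, hni⟩
      have := Finset.card_pos.2 ⟨e, hm⟩
      omega
    exact base G v π D γ γ' hbase hD hv h0 h0' hb hb'
  | succ n ih =>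
    intro π D hD hn
    by_cases hex : ∃ e', e' ∉ D ∧ ¬ inc G v e'
    · obtain ⟨e', he'D, he'i⟩ := hex
      have hDins : ∀ e ∈ insert e' D, ¬ inc G v e := by
        intro e he
        rcases Finset.mem_insert.1 he with h | h
        · rw [h]; exact he'i
        · exact hD e h
      have hmeas :
          (Finset.univ.filter (fun e => e ∉ insert e' D ∧ ¬ inc G v e)).card ≤ n := by
        have hsub2 : Finset.univ.filter (fun e => e ∉ insert e' D ∧ ¬ inc G v e)
            ⊆ Finset.univ.filter (fun e => e ∉ D ∧ ¬ inc G v e) := by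
          intro e he
          rw [Finset.mem_filter] at he ⊢
          exact ⟨he.1, fun hh => he.2.1 (Finset.mem_insert_of_mem hh), he.2.2⟩
        have hme : e' ∈ Finset.univ.filter (fun e => e ∉ D ∧ ¬ inc G v e) := by
          rw [Finset.mem_filter]; exact ⟨Finset.mem_univ e', he'D, he'i⟩
        have hni : e' ∉ Finset.univ.filter (fun e => e ∉ insert e' D ∧ ¬ inc G v e) := by
          rw [Finset.mem_filter]
          rintro ⟨-, hcon, -⟩
          exact hcon (Finset.mem_insert_self e' D)
        have hlt := Finset.card_lt_card
          (Finset.ssubset_def.2 ⟨hsub2, fun hsup => hni (hsup hme)⟩)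
        omega
      by_cases hst : π (G.src e') = π (G.tgt e')
      · rw [step_a G v π D γ e' he'D he'i hst, step_a G v π D γ' e' he'D he'i hst,
          Finset.card_product, Finset.card_product,
          ih π (insert e' D) hDins hmeas]
      · have hc1 := step_b G v π D γ e' he'D he'i hst
        have hc2 := step_b G v π D γ' e' he'D he'i hst
        have i1 := ih (mrg G π (π (G.src e')) (π (G.tgt e'))) (insert e' D) hDins hmeas
        have i2 := ih π (insert e' D) hDins hmeas
        omega
    · have hbase : ∀ e, ¬ inc G v e → e ∈ D := by
        intro e hni
        by_contra heD
        exact hex ⟨e, heD, hni⟩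
      exact base G v π D γ γ' hbase hD hv h0 h0' hb hb'

end FlowAux

/-- If `G` has a nowhere-zero `A`-flow and `v` has degree at most
3, then any nonzero assignment `γ` on the edges at `v` with zero boundary at
`v` extends to a nowhere-zero `A`-flow. -/
theorem flow_extension_at_small_vertex (G : Digraph') {A : Type}
    [AddCommGroup A] [Fintype A]
    (hA : ∃ φ : G.E → A, G.IsNZFlow φ)
    (v : G.V) (hv : G.degree v ≤ 3) (γ : G.E → A)
    (hγ0 : ∀ e, (G.src e = v ∨ G.tgt e = v) → γ e ≠ 0)
    (hγ : G.netFlow γ v = 0) :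
    ∃ φ : G.E → A, G.IsNZFlow φ ∧
      ∀ e, (G.src e = v ∨ G.tgt e = v) → φ e = γ e := by

  classical
  obtain ⟨φ₀, hφ₀f, hφ₀nz⟩ := hA
  have h0 : ∀ e, FlowAux.inc G v e → γ e ≠ 0 := fun e he => hγ0 e he
  have hkey := FlowAux.key G v hv γ φ₀ h0 (fun e _ => hφ₀nz e) hγ (hφ₀f v)
      (Finset.univ.filter (fun e => e ∉ (∅ : Finset G.E) ∧ ¬ FlowAux.inc G v e)).card
      id ∅ (fun e he => absurd he (Finset.notMem_empty e)) le_rfl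
  have hmem0 : φ₀ ∈ FlowAux.NS G v id ∅ φ₀ := by
    refine (FlowAux.mem_NS G v).2 ⟨?_, ?_, ?_, ?_⟩
    · intro w; rw [FlowAux.pnet_id]; exact hφ₀f w
    · intro e he; exact absurd he (Finset.notMem_empty e)
    · intro e _ _; exact hφ₀nz e
    · intro e _; rfl
  have hpos : 0 < (FlowAux.NS G v id ∅ γ).card := by
    rw [hkey]
    exact Finset.card_pos.2 ⟨φ₀, hmem0⟩
  obtain ⟨φ, hφ⟩ := Finset.card_pos.1 hpos
  obtain ⟨hflow, hDz, hnz, hincp⟩ := (FlowAux.mem_NS G v).1 hφ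
  refine ⟨φ, ⟨?_, ?_⟩, ?_⟩
  · intro w
    rw [← FlowAux.pnet_id]
    exact hflow w
  · intro e
    by_cases he : FlowAux.inc G v e
    · rw [hincp e he]
      exact hγ0 e he
    · exact hnz e (Finset.notMem_empty e) he
  · intro e he
    exact hincp e he
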